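/- Let X and Y be real normed spaces. If X is decomposably octahedral, then the ℓ1-sum X ⊕_1 Y (the product X × Y equipped with the norm ‖(x, y)‖ = ‖x‖ + ‖y‖) is decomposably octahedral. -/

import Mathlib

/-- Decomposable octahedrality (DOH). -/
def DecomposablyOctahedral (X : Type*) [NormedAddCommGroup X] [NormedSpace ℝ X] : Prop :=
  ∀ E : Finset X, (∀ x ∈ E, ‖x‖ = 1) → ∀ ε : ℝ, 0 < ε → ∃ y : X, ‖y‖ = 1 ∧
    ∀ (n : ℕ) (ys : Fin n → X), ∑ i, ys i = y →
      ∀ xs : Fin n → X, (∀ i, xs i ∈ E) →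
      ∀ a b : Fin n → ℝ, (∀ i, 0 ≤ a i) → (∀ i, 0 ≤ b i) →
        (1 - ε) * ((∑ i, (a i + b i)) + 2) ≤
          ∑ i, (‖a i • xs i + ys i‖ + ‖b i • xs i - ys i‖)

lemma l1_norm_eq {X Y : Type*} [NormedAddCommGroup X] [NormedAddCommGroup Y]
    (f : WithLp 1 (X × Y)) : ‖f‖ = ‖f.fst‖ + ‖f.snd‖ := by
  rw [WithLp.prod_norm_eq_add (by norm_num)]
  norm_num

/-- If `X` is DOH, then the ℓ₁-sum `X ⊕₁ Y` (with norm `‖(x, y)‖ = ‖x‖ + ‖y‖`) is DOH. -/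
theorem doh_l1_sum_of_doh_left (X Y : Type*) [NormedAddCommGroup X] [NormedSpace ℝ X]
    [NormedAddCommGroup Y] [NormedSpace ℝ Y]
    (h : DecomposablyOctahedral X) :
    DecomposablyOctahedral (WithLp 1 (X × Y)) := by
  classical
  intro E hE ε hε
  -- get some unit vector w of X
  obtain ⟨w, hw, -⟩ := h ∅ (by simp) 1 one_pos
  set ε' := min ε 1 with hε'def
  have hε'pos : 0 < ε' := lt_min hε one_pos
  have hε'le : ε' ≤ ε := min_le_left _ _
  have hε'le1 : ε' ≤ 1 := min_le_right _ _
  -- normalization map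
  set f : WithLp 1 (X × Y) → X := fun e => if e.fst = 0 then w else ‖e.fst‖⁻¹ • e.fst with hf
  set E' : Finset X := insert w (E.image f) with hE'
  have hE'unit : ∀ x ∈ E', ‖x‖ = 1 := by
    intro x hx
    rw [hE', Finset.mem_insert] at hx
    rcases hx with rfl | hx
    · exact hw
    · obtain ⟨e, he, rfl⟩ := Finset.mem_image.mp hx
      by_cases h0 : e.fst = 0
      · simp [hf, h0, hw]
      · simp only [hf, if_neg h0, norm_smul, norm_inv, norm_norm]
        exact inv_mul_cancel₀ (norm_ne_zero_iff.mpr h0)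
  obtain ⟨y, hy, hmain⟩ := h E' hE'unit ε' hε'pos
  refine ⟨(WithLp.equiv 1 (X × Y)).symm (y, 0), ?_, ?_⟩
  · rw [l1_norm_eq]; simp [hy]
  intro n zs hsum xs hxs a b ha hb
  -- first components sum to y
  let F : WithLp 1 (X × Y) →+ X := ⟨⟨fun p => p.fst, rfl⟩, fun _ _ => rfl⟩
  have hsum1 : ∑ i, (zs i).fst = y := by
    have : F (∑ i, zs i) = y := by rw [hsum]; rfl
    rwa [map_sum] at this
  -- key pointwise identity
  have hkey : ∀ i, (a i * ‖(xs i).fst‖) • f (xs i) = a i • (xs i).fst ∧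
      (b i * ‖(xs i).fst‖) • f (xs i) = b i • (xs i).fst := by
    intro i
    by_cases h0 : (xs i).fst = 0
    · simp [h0]
    · constructor <;>
      · simp only [hf, if_neg h0, smul_smul]
        rw [mul_assoc, mul_inv_cancel₀ (norm_ne_zero_iff.mpr h0), mul_one]
  have hmem : ∀ i, f (xs i) ∈ E' := fun i => by
    rw [hE']; exact Finset.mem_insert_of_mem (Finset.mem_image_of_mem f (hxs i))
  have hmain' := hmain n (fun i => (zs i).fst) hsum1 (fun i => f (xs i)) hmem
    (fun i => a i * ‖(xs i).fst‖) (fun i => b i * ‖(xs i).fst‖)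
    (fun i => mul_nonneg (ha i) (norm_nonneg _)) (fun i => mul_nonneg (hb i) (norm_nonneg _))
  simp only [(hkey _).1, (hkey _).2] at hmain'
  -- split the target norms
  have hsplit : ∀ i, ‖a i • xs i + zs i‖ + ‖b i • xs i - zs i‖ =
      (‖a i • (xs i).fst + (zs i).fst‖ + ‖b i • (xs i).fst - (zs i).fst‖) +
      (‖a i • (xs i).snd + (zs i).snd‖ + ‖b i • (xs i).snd - (zs i).snd‖) := by
    intro i
    rw [l1_norm_eq, l1_norm_eq]
    have h1 : (a i • xs i + zs i).fst = a i • (xs i).fst + (zs i).fst := rfl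
    have h2 : (a i • xs i + zs i).snd = a i • (xs i).snd + (zs i).snd := rfl
    have h3 : (b i • xs i - zs i).fst = b i • (xs i).fst - (zs i).fst := rfl
    have h4 : (b i • xs i - zs i).snd = b i • (xs i).snd - (zs i).snd := rfl
    rw [h1, h2, h3, h4]; ring
  have hsnd : ∀ i, (a i + b i) * ‖(xs i).snd‖ ≤
      ‖a i • (xs i).snd + (zs i).snd‖ + ‖b i • (xs i).snd - (zs i).snd‖ := by
    intro i
    calc (a i + b i) * ‖(xs i).snd‖ = ‖(a i • (xs i).snd + (zs i).snd) + (b i • (xs i).snd - (zs i).snd)‖ := by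
          have : (a i • (xs i).snd + (zs i).snd) + (b i • (xs i).snd - (zs i).snd)
              = (a i + b i) • (xs i).snd := by module
          rw [this, norm_smul, Real.norm_of_nonneg (add_nonneg (ha i) (hb i))]
      _ ≤ _ := norm_add_le _ _
  have hEnorm : ∀ i, ‖(xs i).fst‖ + ‖(xs i).snd‖ = 1 := by
    intro i
    have := hE (xs i) (hxs i)
    rwa [l1_norm_eq] at this
  have hS : 0 ≤ ∑ i, (a i + b i) := Finset.sum_nonneg fun i _ => add_nonneg (ha i) (hb i)
  calc (1 - ε) * ((∑ i, (a i + b i)) + 2)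
      ≤ (1 - ε') * ((∑ i, (a i + b i)) + 2) := by nlinarith
    _ = (1 - ε') * ((∑ i, ((a i * ‖(xs i).fst‖) + (b i * ‖(xs i).fst‖))) + 2)
        + ∑ i, (1 - ε') * ((a i + b i) * ‖(xs i).snd‖) := by
        rw [← Finset.mul_sum]
        have hrw : ∑ i, (a i + b i)
            = (∑ i, (a i * ‖(xs i).fst‖ + b i * ‖(xs i).fst‖)) + ∑ i, (a i + b i) * ‖(xs i).snd‖ := by
          rw [← Finset.sum_add_distrib]
          refine Finset.sum_congr rfl fun i _ => ?_
          linear_combination (a i + b i) * (hEnorm i).symm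
        rw [hrw]; ring
    _ ≤ (∑ i, (‖a i • (xs i).fst + (zs i).fst‖ + ‖b i • (xs i).fst - (zs i).fst‖))
        + ∑ i, (‖a i • (xs i).snd + (zs i).snd‖ + ‖b i • (xs i).snd - (zs i).snd‖) := by
        refine add_le_add hmain' (Finset.sum_le_sum fun i _ => ?_)
        calc (1 - ε') * ((a i + b i) * ‖(xs i).snd‖) ≤ (a i + b i) * ‖(xs i).snd‖ := by
              nlinarith [mul_nonneg (add_nonneg (ha i) (hb i)) (norm_nonneg (xs i).snd)]
          _ ≤ _ := hsnd i
    _ = ∑ i, (‖a i • xs i + zs i‖ + ‖b i • xs i - zs i‖) := by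
        rw [← Finset.sum_add_distrib]
        exact Finset.sum_congr rfl fun i _ => (hsplit i).symm
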